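/- Let F₀ = 1, F₁ = 2, Fₙ = F_{n−1} + F_{n−2}. Every integer N has a unique representation N = Σ_{j=1}^{n} yⱼ F_{n−j} with y₁ ≠ 0 and digits yⱼ ∈ {−1, 0, 1} such that the word y₁⋯yₙ avoids the factors 11, 101, 1001, 1(−1), 10(−1) and their digit-wise negatives. -/

import Mathlib

def Fib2 : ℕ → ℕ
  | 0 => 1
  | 1 => 2
  | n + 2 => Fib2 (n + 1) + Fib2 n

/-- Value of a digit word y₁⋯yₙ in the Fibonacci numeration system:
`∑_{j=1}^n yⱼ F_{n-j}`. -/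
def Fval (L : List ℤ) : ℤ :=
  ∑ i ∈ Finset.range L.length, L.getD i 0 * (Fib2 (L.length - 1 - i) : ℤ)

/-- Forbidden factors: 11, 101, 1001, 1(-1), 10(-1) and their negatives. -/
def FforbiddenF : List (List ℤ) :=
  [[1, 1], [1, 0, 1], [1, 0, 0, 1], [1, -1], [1, 0, -1],
   [-1, -1], [-1, 0, -1], [-1, 0, 0, -1], [-1, 1], [-1, 0, 1]]

def FValid (L : List ℤ) : Prop :=
  (∀ d ∈ L, d = -1 ∨ d = 0 ∨ d = 1) ∧ ∀ w ∈ FforbiddenF, ¬ w.IsInfix L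

lemma Fval_nil : Fval [] = 0 := by simp [Fval]

lemma Fval_cons (d : ℤ) (t : List ℤ) :
    Fval (d :: t) = d * Fib2 t.length + Fval t := by
  unfold Fval
  rw [List.length_cons, Finset.sum_range_succ']
  simp only [List.getD_cons_succ, List.getD_cons_zero, Nat.add_sub_cancel, Nat.sub_zero]
  rw [add_comm]
  congr 1
  apply Finset.sum_congr rfl
  intro i _
  rw [show t.length - 1 - i = t.length - (i+1) from by omega]

lemma Fval_cons_zero (t : List ℤ) : Fval ((0:ℤ) :: t) = Fval t := by
  simp [Fval_cons]

lemma Fib2_add_two (n : ℕ) : Fib2 (n+2) = Fib2 (n+1) + Fib2 n := rfl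

lemma Fib2_pos (n : ℕ) : 1 ≤ Fib2 n := by
  induction n using Nat.strong_induction_on with
  | _ n ih =>
    match n with
    | 0 => simp [Fib2]
    | 1 => simp [Fib2]
    | n+2 => have := ih n (by omega); rw [Fib2_add_two]; omega

def Bv : ℕ → ℤ
  | 0 => 0
  | 1 => 1
  | 2 => 2
  | 3 => 3
  | n + 4 => (Fib2 (n+3) : ℤ) + Bv n

lemma Bv_succ_lt (n : ℕ) : Bv n < Bv (n+1) := by
  induction n using Nat.strong_induction_on with
  | _ n ih =>
    match n with
    | 0 => norm_num [Bv]
    | 1 => norm_num [Bv]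
    | 2 => norm_num [Bv]
    | 3 => show Bv 3 < Bv 4
           show (3:ℤ) < (Fib2 3 : ℤ) + Bv 0
           norm_num [Bv, Fib2]
    | n+4 =>
      have h1 := ih n (by omega)
      show (Fib2 (n+3) : ℤ) + Bv n < (Fib2 (n+4) : ℤ) + Bv (n+1)
      have e1 : (Fib2 (n+4):ℤ) = Fib2 (n+3) + Fib2 (n+2) := by
        rw [show n+4=n+2+2 from rfl, Fib2_add_two]; push_cast; ring
      have e2 : (1:ℤ) ≤ Fib2 (n+2) := by exact_mod_cast Fib2_pos (n+2)
      omega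

lemma Bv_nonneg (n : ℕ) : 0 ≤ Bv n := by
  induction n with
  | zero => simp [Bv]
  | succ n ih => have := Bv_succ_lt n; omega

lemma Bv_mono {m n : ℕ} (h : m ≤ n) : Bv m ≤ Bv n := by
  induction n with
  | zero => simp_all
  | succ n ih =>
    rcases Nat.lt_or_ge m (n+1) with h'|h'
    · have := Bv_succ_lt n; have := ih (by omega); omega
    · have : m = n+1 := by omega
      simp [this]

lemma Bv_strict_mono {m n : ℕ} (h : m < n) : Bv m < Bv n := by
  have := Bv_succ_lt m
  have := Bv_mono (show m+1 ≤ n by omega)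
  omega

/-- key identity: F(n+2) = B(n+2) + B n + 1 -/
lemma keyF : ∀ n : ℕ, (Fib2 (n+2) : ℤ) = Bv (n+2) + Bv n + 1 := by
  intro n
  induction n using Nat.strong_induction_on with
  | _ n ih =>
    match n with
    | 0 => norm_num [Bv, Fib2]
    | 1 => show ((Fib2 3 : ℕ) : ℤ) = Bv 3 + Bv 1 + 1; norm_num [Bv, Fib2]
    | n+2 =>
      have h1 := ih n (by omega)
      have h2 := ih (n+1) (by omega)
      have hF : (Fib2 (n+4) : ℤ) = (Fib2 (n+3) : ℤ) + (Fib2 (n+2) : ℤ) := by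
        rw [Fib2_add_two]; push_cast; ring
      have hB4 : Bv (n+4) = (Fib2 (n+3) : ℤ) + Bv n := rfl
      rw [show n+2+2 = n+4 from rfl, hF, hB4]
      omega

lemma Bv_four (n : ℕ) : Bv (n+4) = (Fib2 (n+3) : ℤ) + Bv n := rfl

lemma Bv_unbounded (N : ℤ) : ∃ n, N ≤ Bv n := by
  rcases Int.le_of_lt (Int.lt_add_one_of_le (le_refl N)) with _
  obtain ⟨m, hm⟩ : ∃ m : ℕ, N ≤ m := ⟨N.toNat, Int.self_le_toNat N⟩
  refine ⟨m, le_trans hm ?_⟩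
  clear hm
  induction m with
  | zero => simp [Bv]
  | succ m ih => have := Bv_succ_lt m; push_cast; omega

lemma forbidden_head : ∀ w ∈ FforbiddenF, ∃ h w', w = h :: w' ∧ (h = 1 ∨ h = -1) := by
  intro w hw
  simp only [FforbiddenF, List.mem_cons, List.not_mem_nil, or_false] at hw
  rcases hw with h|h|h|h|h|h|h|h|h|h <;> subst h <;> exact ⟨_, _, rfl, by norm_num⟩

lemma infix_cons_of_head {t : List ℤ} {a h : ℤ} {w'} (hh : h ≠ a)
    (hi : (h :: w').IsInfix (a::t)) : (h :: w').IsInfix t := by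
  rcases List.infix_cons_iff.1 hi with hp | h'
  · rw [List.cons_prefix_cons] at hp; exact absurd hp.1 hh
  · exact h'

lemma FValid_nil : FValid [] := by
  refine ⟨by simp, ?_⟩
  intro w hw hi
  obtain ⟨h, w', rfl, _⟩ := forbidden_head w hw
  rw [List.infix_nil] at hi
  simp at hi

lemma FValid_tail {d : ℤ} {t : List ℤ} (h : FValid (d :: t)) : FValid t := by
  refine ⟨fun x hx => h.1 x (List.mem_cons_of_mem d hx), ?_⟩
  intro w hw hi
  exact h.2 w hw (hi.trans (List.infix_cons (List.infix_refl t)))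

lemma FValid_cons_zero {t : List ℤ} (h : FValid t) : FValid ((0:ℤ)::t) := by
  constructor
  · intro d hd
    rcases List.mem_cons.1 hd with rfl | hd
    · right; left; rfl
    · exact h.1 d hd
  · intro w hw hi
    obtain ⟨hd, w', rfl, hh⟩ := forbidden_head w hw
    refine h.2 _ hw (infix_cons_of_head ?_ hi)
    rcases hh with rfl | rfl <;> norm_num

lemma FValid_cons_one {u : List ℤ} (h : FValid u) (hne : u.getD 0 0 ≠ 1) :
    FValid ((1:ℤ) :: 0 :: 0 :: u) := by
  constructor
  · intro d hd
    simp only [List.mem_cons] at hd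
    rcases hd with rfl|rfl|rfl|hd
    · right; right; rfl
    · right; left; rfl
    · right; left; rfl
    · exact h.1 d hd
  · intro w hw hi
    obtain ⟨hd, w', hwd, hh⟩ := forbidden_head w hw
    rcases List.infix_cons_iff.1 hi with hp | hi2
    · -- w is a prefix of 1::0::0::u
      subst hwd
      simp only [FforbiddenF, List.mem_cons, List.not_mem_nil, or_false] at hw
      rcases hw with hc|hc|hc|hc|hc|hc|hc|hc|hc|hc <;>
        (rw [List.cons_eq_cons] at hc) <;>
        (obtain ⟨h1, h2⟩ := hc) <;> subst h1 <;> subst h2 <;>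
        obtain ⟨r, hr⟩ := hp <;> simp at hr
      -- remaining case should be [1,0,0,1]
      obtain ⟨rfl⟩ := hr
      exact hne rfl
    have hd0 : hd ≠ 0 := by rcases hh with rfl|rfl <;> norm_num
    rw [hwd] at hi2
    have hi3 := infix_cons_of_head hd0 hi2
    have hi4 := infix_cons_of_head hd0 hi3
    exact h.2 _ hw (by rw [hwd]; exact hi4)

def negL (L : List ℤ) : List ℤ := L.map (fun d => -d)

@[simp] lemma negL_length (L : List ℤ) : (negL L).length = L.length := by
  simp [negL]

@[simp] lemma negL_negL (L : List ℤ) : negL (negL L) = L := by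
  simp [negL, List.map_map, Function.comp]

lemma negL_getD (L : List ℤ) (i : ℕ) : (negL L).getD i 0 = -(L.getD i 0) := by
  rcases Nat.lt_or_ge i L.length with h | h
  · rw [List.getD_eq_getElem?_getD, List.getD_eq_getElem?_getD]
    simp [negL, List.getElem?_map]
    rw [List.getElem?_eq_getElem h]
    simp
  · rw [List.getD_eq_default _ _ (by simpa using h), List.getD_eq_default _ _ h]
    simp

lemma Fval_negL (L : List ℤ) : Fval (negL L) = -Fval L := by
  unfold Fval
  rw [negL_length, ← Finset.sum_neg_distrib]
  exact Finset.sum_congr rfl fun i _ => by rw [negL_getD]; ring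

lemma negL_mem_forbidden : ∀ w ∈ FforbiddenF, negL w ∈ FforbiddenF := by
  intro w hw
  simp only [FforbiddenF, List.mem_cons, List.not_mem_nil, or_false] at hw ⊢
  rcases hw with h|h|h|h|h|h|h|h|h|h <;> subst h <;> simp [negL] <;> norm_num

lemma FValid_negL {L : List ℤ} (h : FValid L) : FValid (negL L) := by
  constructor
  · intro d hd
    simp only [negL, List.mem_map] at hd
    obtain ⟨a, ha, rfl⟩ := hd
    rcases h.1 a ha with rfl|rfl|rfl <;> norm_num
  · intro w hw hi
    have : (negL w).IsInfix L := by
      have := hi.map (fun d : ℤ => -d)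
      simpa [negL] using this
    exact h.2 _ (negL_mem_forbidden w hw) this

lemma getD_tri {L : List ℤ} (h : FValid L) :
    L.getD 0 0 = -1 ∨ L.getD 0 0 = 0 ∨ L.getD 0 0 = 1 := by
  cases L with
  | nil => simp
  | cons a t => simpa using h.1 a List.mem_cons_self

lemma struct_one {L : List ℤ} (h : FValid L) (hh : L.getD 0 0 = 1) :
    L = [1] ∨ L = [1, 0] ∨ L = [1, 0, 0] ∨
      ∃ u, L = 1 :: 0 :: 0 :: u ∧ FValid u ∧ u.getD 0 0 ≠ 1 := by
  match L with
  | [] => simp at hh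
  | (a :: t) =>
    rw [List.getD_cons_zero] at hh; subst hh
    match t with
    | [] => exact Or.inl rfl
    | (e :: t') =>
      have he : e = 0 := by
        rcases h.1 e (by simp) with rfl | rfl | rfl
        · exact absurd (h.2 [1,-1] (by simp [FforbiddenF]) ⟨[], t', rfl⟩) (fun x => x)
        · rfl
        · exact absurd (h.2 [1,1] (by simp [FforbiddenF]) ⟨[], t', rfl⟩) (fun x => x)
      subst he
      match t' with
      | [] => exact Or.inr (Or.inl rfl)
      | (f :: t'') =>
        have hf : f = 0 := by
          rcases h.1 f (by simp) with rfl | rfl | rfl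
          · exact absurd (h.2 [1,0,-1] (by simp [FforbiddenF]) ⟨[], t'', rfl⟩) (fun x => x)
          · rfl
          · exact absurd (h.2 [1,0,1] (by simp [FforbiddenF]) ⟨[], t'', rfl⟩) (fun x => x)
        subst hf
        refine Or.inr (Or.inr (Or.inr ⟨t'', rfl, FValid_tail (FValid_tail (FValid_tail h)), ?_⟩))
        intro hu
        match t'', hu with
        | (b :: r), hu =>
          rw [List.getD_cons_zero] at hu; subst hu
          exact h.2 [1,0,0,1] (by simp [FforbiddenF]) ⟨[], r, rfl⟩

lemma Fval_triple (u : List ℤ) :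
    Fval ((1:ℤ) :: 0 :: 0 :: u) = (Fib2 (u.length + 2) : ℤ) + Fval u := by
  rw [Fval_cons, Fval_cons_zero, Fval_cons_zero]
  simp

def P1 (n : ℕ) : Prop := ∀ L, FValid L → L.length = n →
  (L.getD 0 0 = 1 → Bv (n-1) < Fval L ∧ Fval L ≤ Bv n) ∧
  (L.getD 0 0 = -1 → -Bv n ≤ Fval L ∧ Fval L < -Bv (n-1)) ∧
  (L.getD 0 0 = 0 → -Bv (n-1) ≤ Fval L ∧ Fval L ≤ Bv (n-1))

def P2 (n : ℕ) : Prop := ∀ L L', FValid L → FValid L' → L.length = n → L'.length = n →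
  Fval L = Fval L' → L = L'

def P3 (n : ℕ) : Prop := ∀ N : ℤ, -Bv n ≤ N → N ≤ Bv n →
  ∃ L, FValid L ∧ L.length = n ∧ Fval L = N

lemma head1_aux (n : ℕ) (ih : ∀ m, m < n → P1 m) :
    ∀ L, FValid L → L.length = n → L.getD 0 0 = 1 →
      Bv (n-1) < Fval L ∧ Fval L ≤ Bv n := by
  intro L hval hlen hh
  rcases struct_one hval hh with rfl | rfl | rfl | ⟨u, rfl, hu, hune⟩
  · subst hlen; norm_num [Fval_cons, Fval_nil, Bv, Fib2]
  · subst hlen; norm_num [Fval_cons, Fval_nil, Bv, Fib2]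
  · subst hlen; norm_num [Fval_cons, Fval_nil, Bv, Fib2]
  · have hlen' : u.length + 3 = n := by simpa using hlen
    set m := u.length with hm
    have hFv : Fval (1 :: 0 :: 0 :: u) = (Fib2 (m+2) : ℤ) + Fval u := Fval_triple u
    have hkF := keyF m
    have hP := ih m (by omega) u hu rfl
    have hB0 := Bv_nonneg m
    have htri := getD_tri hu
    have hbounds : -Bv m ≤ Fval u ∧ Fval u ≤ Bv (m-1) := by
      rcases htri with h1 | h1 | h1
      · have := hP.2.1 h1
        have := Bv_nonneg (m-1)
        omega
      · have := hP.2.2 h1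
        have := Bv_mono (Nat.sub_le m 1)
        omega
      · exact absurd h1 hune
    rw [hFv]
    rcases Nat.eq_zero_or_eq_succ_pred m with hm0 | hm0
    · -- m = 0 : u = [], Fval u = 0
      have hu0 : u = [] := List.eq_nil_of_length_eq_zero (by omega)
      subst hu0
      simp only [Fval_nil]
      have : n = 3 := by omega
      subst this
      norm_num [Bv, Fib2, hm0]
    · -- m = k+1
      set k := m - 1 with hk
      have hm1 : m = k + 1 := hm0
      have hB4 : Bv (k+4) = (Fib2 (k+3) : ℤ) + Bv k := Bv_four k
      have hn : n = k + 4 := by omega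
      rw [hn, show k+4-1 = k+3 from rfl]
      have hkF' := keyF (k+1)
      rw [show k+1+2 = k+3 from rfl] at hkF'
      have hFm : (Fib2 (m+2):ℤ) = (Fib2 (k+3):ℤ) := by rw [hm1]
      have hb1 := hbounds.1
      have hb2 := hbounds.2
      rw [hm1] at hb1
      have := Bv_nonneg k
      omega

lemma P1_of_ih (n : ℕ) (ih : ∀ m, m < n → P1 m) : P1 n := by
  intro L hval hlen
  refine ⟨head1_aux n ih L hval hlen, ?_, ?_⟩
  · intro hh
    have h1 := head1_aux n ih (negL L) (FValid_negL hval) (by simp [hlen])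
      (by rw [negL_getD, hh]; norm_num)
    rw [Fval_negL] at h1
    omega
  · intro hh
    match L, hlen, hh with
    | [], hlen, hh =>
      subst hlen
      simp [Fval_nil, Bv]
    | (a :: t), hlen, hh =>
      rw [List.getD_cons_zero] at hh; subst hh
      rw [Fval_cons_zero]
      have hlt : t.length < n := by simp at hlen; omega
      have hn1 : n - 1 = t.length := by simp at hlen; omega
      rw [hn1]
      have hP := ih t.length hlt t (FValid_tail hval) rfl
      have h0 := Bv_nonneg t.length
      have h0' := Bv_nonneg (t.length - 1)
      have hmono := Bv_mono (Nat.sub_le t.length 1)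
      rcases getD_tri (FValid_tail hval) with h1 | h1 | h1
      · have := hP.2.1 h1; omega
      · have := hP.2.2 h1; omega
      · have := hP.1 h1; omega

lemma inj1 (n : ℕ) (ih2 : ∀ m, m < n → P2 m) :
    ∀ L L', FValid L → FValid L' → L.length = n → L'.length = n →
      L.getD 0 0 = 1 → L'.getD 0 0 = 1 → Fval L = Fval L' → L = L' := by
  intro L L' hv hv' hl hl' hh hh' heq
  rcases struct_one hv hh with rfl|rfl|rfl|⟨u, rfl, hu, hu1⟩ <;>
    rcases struct_one hv' hh' with rfl|rfl|rfl|⟨u', rfl, hu', hu1'⟩ <;>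
    simp only [List.length_cons, List.length_nil] at hl hl' <;>
    try rfl
  all_goals try (exfalso; omega)
  · -- [1,0,0] vs u'
    have : u' = [] := List.eq_nil_of_length_eq_zero (by omega)
    subst this; rfl
  · -- u vs [1,0,0]
    have : u = [] := List.eq_nil_of_length_eq_zero (by omega)
    subst this; rfl
  · -- u vs u'
    have hlu : u.length = u'.length := by omega
    have heq' : Fval u = Fval u' := by
      rw [Fval_triple, Fval_triple, hlu] at heq
      omega
    have := ih2 u.length (by omega) u u' hu hu' rfl hlu.symm heq'
    rw [this]

lemma P2_of_ih (n : ℕ) (ih : ∀ m, m < n → P1 m ∧ P2 m) : P2 n := by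
  have p1 : P1 n := P1_of_ih n (fun m hm => (ih m hm).1)
  have ih2 : ∀ m, m < n → P2 m := fun m hm => (ih m hm).2
  intro L L' hv hv' hl hl' heq
  have t1 := getD_tri hv
  have t2 := getD_tri hv'
  have b1 := p1 L hv hl
  have b2 := p1 L' hv' hl'
  have hB := Bv_nonneg (n-1)
  have hsame : L.getD 0 0 = L'.getD 0 0 := by
    rcases t1 with h|h|h <;> rcases t2 with h'|h'|h'
    · rw [h, h']
    · exfalso; have := b1.2.1 h; have := b2.2.2 h'; omega
    · exfalso; have := b1.2.1 h; have := b2.1 h'; omega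
    · exfalso; have := b1.2.2 h; have := b2.2.1 h'; omega
    · rw [h, h']
    · exfalso; have := b1.2.2 h; have := b2.1 h'; omega
    · exfalso; have := b1.1 h; have := b2.2.1 h'; omega
    · exfalso; have := b1.1 h; have := b2.2.2 h'; omega
    · rw [h, h']
  rcases t1 with h|h|h
  · have h' : L'.getD 0 0 = -1 := hsame.symm.trans h
    have key := inj1 n ih2 (negL L) (negL L') (FValid_negL hv) (FValid_negL hv')
      (by simp [hl]) (by simp [hl'])
      (by rw [negL_getD, h]; norm_num) (by rw [negL_getD, h']; norm_num)
      (by rw [Fval_negL, Fval_negL, heq])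
    have := congrArg negL key
    simpa using this
  · have h' : L'.getD 0 0 = 0 := hsame.symm.trans h
    match L, L', hl, hl' with
    | [], [], _, _ => rfl
    | [], (b::t'), hl, hl' => exfalso; simp at hl hl'; omega
    | (a::t), [], hl, hl' => exfalso; simp at hl hl'; omega
    | (a::t), (b::t'), hl, hl' =>
      rw [List.getD_cons_zero] at h h'
      subst h; subst h'
      simp only [List.length_cons] at hl hl'
      rw [Fval_cons_zero, Fval_cons_zero] at heq
      have := ih2 t.length (by omega) t t' (FValid_tail hv) (FValid_tail hv')
        rfl (by omega) heq
      rw [this]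
  · have h' : L'.getD 0 0 = 1 := hsame.symm.trans h
    exact inj1 n ih2 L L' hv hv' hl hl' h h' heq

lemma valid_one : FValid [(1:ℤ)] := by
  constructor
  · decide
  · decide

lemma valid_onezero : FValid [(1:ℤ), 0] := by
  constructor
  · decide
  · decide

lemma valid_onezerozero : FValid [(1:ℤ), 0, 0] := by
  constructor
  · decide
  · decide

lemma surj1 (n : ℕ) (ih : ∀ m, m < n → P1 m ∧ P3 m) :
    ∀ N : ℤ, Bv (n-1) < N → N ≤ Bv n → ∃ L, FValid L ∧ L.length = n ∧ Fval L = N := by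
  intro N h1 h2
  match n with
  | 0 => exfalso; norm_num [Bv] at h1 h2; omega
  | 1 =>
    have : N = 1 := by norm_num [Bv] at h1 h2; omega
    exact ⟨[1], valid_one, rfl, by subst this; simp [Fval_cons, Fval_nil, Fib2]⟩
  | 2 =>
    have : N = 2 := by norm_num [Bv] at h1 h2; omega
    exact ⟨[1,0], valid_onezero, rfl, by subst this; simp [Fval_cons, Fval_nil, Fib2]⟩
  | 3 =>
    have : N = 3 := by norm_num [Bv] at h1 h2; omega
    exact ⟨[1,0,0], valid_onezerozero, rfl,
      by subst this; simp [Fval_cons, Fval_nil, Fib2, Fib2_add_two]⟩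
  | (m+4) =>
    set j := m + 1 with hj
    set M := N - (Fib2 (j+2) : ℤ) with hM
    have hkj := keyF j
    have hB4 : Bv (m+4) = (Fib2 (m+3) : ℤ) + Bv m := Bv_four m
    have hF : (Fib2 (m+3) : ℤ) = (Fib2 (j+2) : ℤ) := by rw [hj]
    have hn1 : m + 4 - 1 = j + 2 := by omega
    rw [hn1] at h1
    have hMub : M ≤ Bv m := by omega
    have hMlb : -Bv j ≤ M := by omega
    have hmono : Bv m ≤ Bv j := Bv_mono (by omega)
    obtain ⟨u, hu, hulen, huval⟩ := (ih j (by omega)).2 M hMlb (by omega)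
    have hune : u.getD 0 0 ≠ 1 := by
      intro hc
      have hb := ((ih j (by omega)).1 u hu hulen).1 hc
      rw [huval] at hb
      have hjm : j - 1 = m := by omega
      rw [hjm] at hb
      omega
    refine ⟨1 :: 0 :: 0 :: u, FValid_cons_one hu hune, by simp [hulen, hj], ?_⟩
    rw [Fval_triple, hulen, huval]
    omega

lemma P3_of_ih (n : ℕ) (ih : ∀ m, m < n → P1 m ∧ P3 m) : P3 n := by
  intro N hlow hhigh
  match n with
  | 0 =>
    have : N = 0 := by norm_num [Bv] at hlow hhigh; omega
    exact ⟨[], FValid_nil, rfl, by rw [Fval_nil, this]⟩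
  | (n+1) =>
    rcases le_or_gt N (Bv n) with hub | hub
    · rcases le_or_gt (-Bv n) N with hlb | hlb
      · obtain ⟨t, ht, htlen, htval⟩ := (ih n (by omega)).2 N hlb hub
        exact ⟨0 :: t, FValid_cons_zero ht, by simp [htlen], by rw [Fval_cons_zero, htval]⟩
      · -- N < -Bv n : use negation
        obtain ⟨L, hL, hLlen, hLval⟩ := surj1 (n+1) ih (-N)
          (by simp only [Nat.add_sub_cancel]; omega) (by omega)
        exact ⟨negL L, FValid_negL hL, by simp [hLlen], by rw [Fval_negL, hLval]; ring⟩
    · exact surj1 (n+1) ih N (by simpa using hub) hhigh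

theorem mainP : ∀ n : ℕ, P1 n ∧ P2 n ∧ P3 n := by
  intro n
  induction n using Nat.strong_induction_on with
  | _ n ih =>
    refine ⟨P1_of_ih n (fun m hm => (ih m hm).1), ?_, ?_⟩
    · exact P2_of_ih n (fun m hm => ⟨(ih m hm).1, (ih m hm).2.1⟩)
    · exact P3_of_ih n (fun m hm => ⟨(ih m hm).1, (ih m hm).2.2⟩)

lemma head_cond_iff (L : List ℤ) :
    (∀ h : L ≠ [], L.head h ≠ 0) ↔ (L = [] ∨ L.getD 0 0 ≠ 0) := by
  cases L <;> simp

lemma exists_pos (N : ℤ) (hN : 0 < N) :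
    ∃ L, FValid L ∧ L.getD 0 0 = 1 ∧ Fval L = N ∧
      (∀ L', FValid L' → L'.getD 0 0 ≠ 0 → Fval L' = N → L' = L) := by
  have hex : ∃ n : ℕ, N ≤ Bv n := Bv_unbounded N
  set n := Nat.find hex with hn
  have hfind : N ≤ Bv n := Nat.find_spec hex
  have hmin : ∀ m, m < n → ¬ N ≤ Bv m := fun m hm => Nat.find_min hex hm
  have hn1 : 1 ≤ n := by
    by_contra hc
    have h0 : n = 0 := by omega
    rw [h0] at hfind
    norm_num [Bv] at hfind
    omega
  have hlow : Bv (n-1) < N := by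
    have := hmin (n-1) (by omega)
    omega
  obtain ⟨L, hLv, hLlen, hLval⟩ := (mainP n).2.2 N (by have := Bv_nonneg n; omega) hfind
  have hLb := (mainP n).1 L hLv hLlen
  have hhead : L.getD 0 0 = 1 := by
    have hB := Bv_nonneg (n-1)
    rcases getD_tri hLv with h|h|h
    · have := hLb.2.1 h; omega
    · have := hLb.2.2 h; omega
    · exact h
  refine ⟨L, hLv, hhead, hLval, ?_⟩
  intro L' hv' hh' hval'
  have hb' := (mainP L'.length).1 L' hv' rfl
  have hhead' : L'.getD 0 0 = 1 := by
    have hB := Bv_nonneg (L'.length - 1)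
    rcases getD_tri hv' with h|h|h
    · have := hb'.2.1 h; omega
    · exact absurd h hh'
    · exact h
  have hb2 := hb'.1 hhead'
  rw [hval'] at hb2
  have hlen' : L'.length = n := by
    have hle : n ≤ L'.length := Nat.find_le hb2.2
    by_contra hc
    have h1 : n ≤ L'.length - 1 := by omega
    have := Bv_mono h1
    omega
  exact (mainP n).2.1 L' L hv' hLv hlen' hLlen (by rw [hval', hLval])

theorem stmt_9' (N : ℤ) :
    ∃! L : List ℤ,
      (∀ d ∈ L, d = -1 ∨ d = 0 ∨ d = 1) ∧
      (∀ h : L ≠ [], L.head h ≠ 0) ∧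
      (∀ w ∈ FforbiddenF, ¬ w.IsInfix L) ∧
      Fval L = N := by
  rcases lt_trichotomy N 0 with hneg | rfl | hpos
  · obtain ⟨L, hv, hh, hval, huniq⟩ := exists_pos (-N) (by omega)
    refine ⟨negL L, ⟨(FValid_negL hv).1, ?_, (FValid_negL hv).2, ?_⟩, ?_⟩
    · rw [head_cond_iff]
      right
      rw [negL_getD, hh]
      norm_num
    · rw [Fval_negL, hval]; ring
    · rintro y ⟨hy1, hy2, hy3, hy4⟩
      have hyv : FValid y := ⟨hy1, hy3⟩
      have hyne : y ≠ [] := by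
        intro hc; subst hc; rw [Fval_nil] at hy4; omega
      have hyh : y.getD 0 0 ≠ 0 := by
        rcases (head_cond_iff y).1 hy2 with hc | hc
        · exact absurd hc hyne
        · exact hc
      have key := huniq (negL y) (FValid_negL hyv)
        (by rw [negL_getD]; omega) (by rw [Fval_negL, hy4])
      have := congrArg negL key
      simpa using this
  · refine ⟨[], ⟨by simp, by simp, FValid_nil.2, Fval_nil⟩, ?_⟩
    rintro y ⟨hy1, hy2, hy3, hy4⟩
    have hyv : FValid y := ⟨hy1, hy3⟩
    rcases (head_cond_iff y).1 hy2 with hc | hc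
    · exact hc
    exfalso
    have hb := (mainP y.length).1 y hyv rfl
    have hB := Bv_nonneg (y.length - 1)
    rcases getD_tri hyv with h|h|h
    · have := hb.2.1 h; omega
    · exact hc h
    · have := hb.1 h; omega
  · obtain ⟨L, hv, hh, hval, huniq⟩ := exists_pos N hpos
    refine ⟨L, ⟨hv.1, ?_, hv.2, hval⟩, ?_⟩
    · rw [head_cond_iff]
      right
      rw [hh]
      norm_num
    · rintro y ⟨hy1, hy2, hy3, hy4⟩
      have hyv : FValid y := ⟨hy1, hy3⟩
      have hyne : y ≠ [] := by
        intro hc; subst hc; rw [Fval_nil] at hy4; omega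
      have hyh : y.getD 0 0 ≠ 0 := by
        rcases (head_cond_iff y).1 hy2 with hc | hc
        · exact absurd hc hyne
        · exact hc
      exact huniq y hyv hyh hy4

theorem stmt_9 (N : ℤ) :
    ∃! L : List ℤ,
      (∀ d ∈ L, d = -1 ∨ d = 0 ∨ d = 1) ∧
      (∀ h : L ≠ [], L.head h ≠ 0) ∧
      (∀ w ∈ FforbiddenF, ¬ w.IsInfix L) ∧
      Fval L = N := stmt_9' N
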